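/- For every real number φ, a controlled-phase gate followed by a SWAP of the two qubits is implemented, up to a global phase, with three CNOT gates and three single-qubit Rz rotations: exp(iφ/4) · CX₁₂ · CX₂₁ · (I₂ ⊗ Rz(−φ/2)) · CX₁₂ · (Rz(φ/2) ⊗ Rz(φ/2)) = SWAP · CP(φ). In particular, taking φ = 2π/2^k this implements a SWAP followed by the controlled phase gate R_k used in the quantum Fourier transform with CNOT-cost three. -/

import Mathlib

open Kronecker

/-- `Rz θ` is the 2×2 complex matrix `diag(exp(−iθ/2), exp(iθ/2))`. -/
noncomputable def Rz (θ : ℝ) : Matrix (Fin 2) (Fin 2) ℂ :=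
  Matrix.diagonal ![Complex.exp (-(θ : ℂ) * Complex.I / 2), Complex.exp ((θ : ℂ) * Complex.I / 2)]

/-- `Ry θ` is the real rotation matrix by angle `θ/2`, regarded as a complex matrix. -/
noncomputable def Ry (θ : ℝ) : Matrix (Fin 2) (Fin 2) ℂ :=
  !![(Real.cos (θ / 2) : ℂ), -(Real.sin (θ / 2) : ℂ);
     (Real.sin (θ / 2) : ℂ), (Real.cos (θ / 2) : ℂ)]

/-- The `SX` gate `(1/2)·[[1+i, 1−i],[1−i, 1+i]]`. -/
noncomputable def SX : Matrix (Fin 2) (Fin 2) ℂ :=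
  (1 / 2 : ℂ) • !![1 + Complex.I, 1 - Complex.I; 1 - Complex.I, 1 + Complex.I]
/-- CNOT with control on the first qubit: sends `|a b⟩` to `|a (b ⊕ a)⟩`. -/
def CX₁₂ : Matrix (Fin 2 × Fin 2) (Fin 2 × Fin 2) ℂ :=
  Matrix.of fun p q => if p = (q.1, q.1 + q.2) then 1 else 0

/-- CNOT with control on the second qubit: sends `|a b⟩` to `|(a ⊕ b) b⟩`. -/
def CX₂₁ : Matrix (Fin 2 × Fin 2) (Fin 2 × Fin 2) ℂ :=
  Matrix.of fun p q => if p = (q.1 + q.2, q.2) then 1 else 0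

/-- The SWAP gate: sends `|a b⟩` to `|b a⟩`. -/
def SWAP : Matrix (Fin 2 × Fin 2) (Fin 2 × Fin 2) ℂ :=
  Matrix.of fun p q => if p = (q.2, q.1) then 1 else 0

/-- The controlled-phase gate `diag(1, 1, 1, exp(iφ))` (control on the first qubit). -/
noncomputable def CP (φ : ℝ) : Matrix (Fin 2 × Fin 2) (Fin 2 × Fin 2) ℂ :=
  Matrix.diagonal fun p => if p = (1, 1) then Complex.exp ((φ : ℂ) * Complex.I) else 1

set_option maxHeartbeats 4000000 in
/-- A controlled-phase gate followed by a SWAP is implemented, up to a global phase,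
with three CNOT gates and three single-qubit `Rz` rotations. -/
theorem swap_cp_decomposition (φ : ℝ) :
    Complex.exp ((φ : ℂ) * Complex.I / 4) •
        (CX₁₂ * CX₂₁ * ((1 : Matrix (Fin 2) (Fin 2) ℂ) ⊗ₖ Rz (-φ / 2)) * CX₁₂ *
          (Rz (φ / 2) ⊗ₖ Rz (φ / 2))) = SWAP * CP φ := by
  ext ⟨a,b⟩ ⟨c,d⟩
  fin_cases a <;> fin_cases b <;> fin_cases c <;> fin_cases d <;>
    simp [CX₁₂, CX₂₁, SWAP, CP, Rz, Matrix.mul_apply, Matrix.kroneckerMap_apply,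
      Fintype.sum_prod_type, Fin.sum_univ_two, Matrix.one_apply, Matrix.diagonal,
      Prod.ext_iff, ← Complex.exp_add] <;>
    ring_nf <;> simp [← Complex.exp_add, Complex.exp_zero] <;> ring_nf
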